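/- Let (E_n) be the sequence of rationals with E_1 = E_2 = 0 satisfying, for all n ≥ 3, E_n = (n/(n−1)) E_{n−1} + (n−2)/(n−1) if n is even and E_n = (n/(n−1)) E_{n−1} + 1 if n is odd. Then for all n ≥ 2, E_n = n · ∑_{j=2}^{⌊n/2⌋} 1/j + δ_odd(n), where δ_odd(n) = 1 if n is odd and 0 if n is even. -/

import Mathlib

/-- The solution of the first-order recurrence for the expected Colless index:
E_n = n·∑_{j=2}^{⌊n/2⌋} 1/j + δ_odd(n). -/
theorem recurrence_solution (E : ℕ → ℚ) (hE1 : E 1 = 0) (hE2 : E 2 = 0)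
    (hrec : ∀ n, 3 ≤ n →
      E n = (n : ℚ) / ((n : ℚ) - 1) * E (n - 1) +
        (if Even n then ((n : ℚ) - 2) / ((n : ℚ) - 1) else 1)) :
    ∀ n, 2 ≤ n →
      E n = (n : ℚ) * ∑ j ∈ Finset.Icc 2 (n / 2), (1 : ℚ) / j +
        (if Odd n then 1 else 0) := by
  intro n hn
  induction n, hn using Nat.le_induction with
  | base => simp [hE2]
  | succ n hn ih =>
    have h3 : 3 ≤ n + 1 := by omega
    have hr := hrec (n + 1) h3
    simp only [Nat.add_sub_cancel] at hr
    have hn0 : (n : ℚ) ≠ 0 := by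
      have : (2 : ℚ) ≤ (n : ℚ) := by exact_mod_cast hn
      linarith
    have hcast : ((n : ℚ) + 1) - 1 = (n : ℚ) := by ring
    rcases Nat.even_or_odd n with he | ho
    
    · -- n even, n+1 odd
      have hne : ¬ Even (n + 1) := by simp [Nat.even_add_one, he]
      have hno : ¬ Odd n := by simp [Nat.odd_iff, Nat.even_iff.mp he]
      have he' := Nat.even_iff.mp he
      have hdiv : (n + 1) / 2 = n / 2 := by omega
      rw [hr, ih, hdiv]
      simp only [hne, hno, if_false, if_true, Nat.odd_add_one, he, Nat.cast_add, not_false_eq_true,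
        Nat.cast_one, hcast]
      field_simp
      ring
    · -- n odd, n+1 even
      obtain ⟨j, hj⟩ := ho
      have hj1 : 1 ≤ j := by omega
      have hdiv : (n + 1) / 2 = j + 1 := by omega
      have hdiv' : n / 2 = j := by omega
      have hev : Even (n + 1) := ⟨j + 1, by omega⟩
      have hsum : ∑ x ∈ Finset.Icc 2 (j + 1), (1 : ℚ) / x =
          (∑ x ∈ Finset.Icc 2 j, (1 : ℚ) / x) + 1 / (j + 1 : ℕ) := by
        exact Finset.sum_Icc_succ_top (by omega) _
      rw [hr, ih, hdiv, hdiv', hsum]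
      have hno : ¬ Odd (n + 1) := by simp [hev]
      simp only [hno, if_false, Nat.odd_iff.mpr (by omega : n % 2 = 1), if_true,
        hev, Nat.cast_add, Nat.cast_one, hcast, if_pos hev]
      have hncast : (n : ℚ) = 2 * j + 1 := by exact_mod_cast congrArg (Nat.cast : ℕ → ℚ) hj
      have hj0 : (j : ℚ) + 1 ≠ 0 := by positivity
      rw [hncast]
      push_cast
      field_simp
      ring
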